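/- arXiv:1801.00465 — 6 statements merged into one kernel-verified Lean document; each statement's English description precedes it below -/
import Mathlib

section
/- Let a₀, a₁, a₂, a₃ ∈ (0, π), set k_j = exp(i a_j) and u_j = t_j(conj k_j − k_j) + k_j for real t_j. If a₀ + a₁ + a₂ + a₃ ≤ π or 3π ≤ a₀ + a₁ + a₂ + a₃, then there is no solution of the equation 1 + 2 Re(conj(k₀) u₁ u₂ u₃) = |u₁|² + |u₂|² + |u₃|² with t₁, t₂ ≥ 1 and t₃ = 1. -/
open Complex Real

lemma tance_aux (a t : ℝ) (ha0 : 0 < a) (hapi : a < π) (ht : 1 ≤ t) (z : ℂ)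
    (hre : z.re = 1 + 2*(t-1)*Real.sin a^2)
    (him : z.im = 2*(1-t)*Real.sin a*Real.cos a) :
    ∃ θ : ℝ, a - π < θ ∧ θ < a ∧ -(π/2) < θ ∧ θ < π/2 ∧
      z = (‖z‖ : ℝ) * Complex.exp (θ*Complex.I) := by
  have hs : 0 < Real.sin a := Real.sin_pos_of_pos_of_lt_pi ha0 hapi
  set A := z.re with hAdef
  set B := z.im with hBdef
  have hA : 1 ≤ A := by rw [hre]; nlinarith
  have hA0 : (0:ℝ) < A := lt_of_lt_of_le one_pos hA
  have hkey : B * Real.cos a < A * Real.sin a := by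
    rw [hre, him]; nlinarith [Real.sin_sq_add_cos_sq a]
  refine ⟨Real.arctan (B/A), ?_, ?_, Real.neg_pi_div_two_lt_arctan _, Real.arctan_lt_pi_div_two _, ?_⟩
  · rcases le_or_gt a (π/2) with h | h
    · have := Real.neg_pi_div_two_lt_arctan (B/A); linarith
    · have hc : Real.cos a < 0 :=
        Real.cos_neg_of_pi_div_two_lt_of_lt h (by linarith [Real.pi_pos])
      have h1 : Real.sin a / Real.cos a < B / A := by
        rw [show Real.sin a / Real.cos a = (-Real.sin a)/(-Real.cos a) by
          rw [neg_div_neg_eq], div_lt_div_iff₀ (by linarith) hA0]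
        nlinarith
      have h2 : Real.arctan (Real.sin a / Real.cos a) < Real.arctan (B/A) :=
        Real.arctan_strictMono h1
      rwa [show Real.sin a / Real.cos a = Real.tan (a - π) by
          rw [Real.tan_sub_pi, Real.tan_eq_sin_div_cos],
        Real.arctan_tan (by linarith) (by linarith)] at h2
  · rcases le_or_gt (π/2) a with h | h
    · exact lt_of_lt_of_le (Real.arctan_lt_pi_div_two _) h
    · have hc : 0 < Real.cos a := Real.cos_pos_of_mem_Ioo ⟨by linarith, h⟩
      have h1 : B / A < Real.sin a / Real.cos a := by
        rw [div_lt_div_iff₀ hA0 hc]; nlinarith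
      have h2 := Real.arctan_strictMono h1
      rwa [show Real.sin a / Real.cos a = Real.tan a from (Real.tan_eq_sin_div_cos a).symm,
        Real.arctan_tan (by linarith) h] at h2
  · have habs : ‖z‖ = Real.sqrt (A^2+B^2) := by
      rw [Complex.norm_def, Complex.normSq_apply]; ring_nf; rfl
    have hr0 : 0 < Real.sqrt (A^2+B^2) := Real.sqrt_pos.2 (by nlinarith)
    have hsq : Real.sqrt (1+(B/A)^2) = Real.sqrt (A^2+B^2) / A := by
      rw [show 1+(B/A)^2 = (A^2+B^2)/A^2 by field_simp,
        Real.sqrt_div (by positivity), Real.sqrt_sq hA0.le]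
    apply Complex.ext
    · simp only [Complex.mul_re, Complex.ofReal_re, Complex.ofReal_im,
        Complex.exp_ofReal_mul_I_re, Complex.exp_ofReal_mul_I_im, zero_mul, sub_zero]
      rw [habs, Real.cos_arctan, hsq]
      field_simp; rfl
    · simp only [Complex.mul_im, Complex.ofReal_re, Complex.ofReal_im,
        Complex.exp_ofReal_mul_I_re, Complex.exp_ofReal_mul_I_im, zero_mul, add_zero]
      rw [habs, Real.sin_arctan, hsq]
      field_simp; rfl
theorem stmt2 (a0 a1 a2 a3 : ℝ)
    (h0 : a0 ∈ Set.Ioo 0 π) (h1 : a1 ∈ Set.Ioo 0 π)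
    (h2 : a2 ∈ Set.Ioo 0 π) (h3 : a3 ∈ Set.Ioo 0 π)
    (hsum : a0 + a1 + a2 + a3 ≤ π ∨ 3 * π ≤ a0 + a1 + a2 + a3) :
    ¬ ∃ t1 t2 t3 : ℝ, 1 ≤ t1 ∧ 1 ≤ t2 ∧ t3 = 1 ∧
      (let k0 : ℂ := Complex.exp (a0 * Complex.I)
       let k1 : ℂ := Complex.exp (a1 * Complex.I)
       let k2 : ℂ := Complex.exp (a2 * Complex.I)
       let k3 : ℂ := Complex.exp (a3 * Complex.I)
       let u1 : ℂ := (t1 : ℂ) * ((starRingEnd ℂ) k1 - k1) + k1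
       let u2 : ℂ := (t2 : ℂ) * ((starRingEnd ℂ) k2 - k2) + k2
       let u3 : ℂ := (t3 : ℂ) * ((starRingEnd ℂ) k3 - k3) + k3
       1 + 2 * ((starRingEnd ℂ) k0 * u1 * u2 * u3).re
         = ‖u1‖ ^ 2 + ‖u2‖ ^ 2 + ‖u3‖ ^ 2) := by
  rintro ⟨t1, t2, t3, ht1, ht2, rfl, heq⟩
  dsimp only at heq
  set k0 : ℂ := Complex.exp (a0 * Complex.I) with hk0def
  set k1 : ℂ := Complex.exp (a1 * Complex.I) with hk1def
  set k2 : ℂ := Complex.exp (a2 * Complex.I) with hk2def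
  set k3 : ℂ := Complex.exp (a3 * Complex.I) with hk3def
  set u1 : ℂ := (t1 : ℂ) * ((starRingEnd ℂ) k1 - k1) + k1 with hu1def
  set u2 : ℂ := (t2 : ℂ) * ((starRingEnd ℂ) k2 - k2) + k2 with hu2def
  -- basic norm facts
  have habs0 : ‖k0‖ = 1 := by
    rw [hk0def, Complex.norm_exp]; simp
  have habs3 : ‖k3‖ = 1 := by
    rw [hk3def, Complex.norm_exp]; simp
  have hn0 : Complex.normSq k0 = 1 := by rw [Complex.normSq_eq_norm_sq, habs0]; norm_num
  have hn3 : Complex.normSq k3 = 1 := by rw [Complex.normSq_eq_norm_sq, habs3]; norm_num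
  have hu3 : ((1:ℝ) : ℂ) * ((starRingEnd ℂ) k3 - k3) + k3 = (starRingEnd ℂ) k3 := by push_cast; ring
  rw [hu3] at heq
  have habsu3 : ‖(starRingEnd ℂ) k3‖ = 1 := by rw [Complex.norm_conj, habs3]
  -- the equation forces w = 0
  have hw : (starRingEnd ℂ) k0 * u1 - k3 * (starRingEnd ℂ) u2 = 0 := by
    rw [← Complex.normSq_eq_zero, Complex.normSq_sub]
    have e1 : Complex.normSq ((starRingEnd ℂ) k0 * u1) = Complex.normSq u1 := by
      rw [Complex.normSq_mul, Complex.normSq_conj, hn0, one_mul]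
    have e2 : Complex.normSq (k3 * (starRingEnd ℂ) u2) = Complex.normSq u2 := by
      rw [Complex.normSq_mul, Complex.normSq_conj, hn3, one_mul]
    have e3 : (starRingEnd ℂ) k0 * u1 * (starRingEnd ℂ) (k3 * (starRingEnd ℂ) u2)
        = (starRingEnd ℂ) k0 * u1 * u2 * (starRingEnd ℂ) k3 := by
      rw [map_mul, Complex.conj_conj]; ring
    rw [e1, e2, e3]
    rw [habsu3, ← Complex.normSq_eq_norm_sq, ← Complex.normSq_eq_norm_sq] at heq
    linarith [heq]
  have hu1eq : u1 = k0 * k3 * (starRingEnd ℂ) u2 := by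
    have h := sub_eq_zero.mp hw
    calc u1 = k0 * ((starRingEnd ℂ) k0 * u1) := by
          rw [← mul_assoc, Complex.mul_conj, hn0]; norm_num
        _ = k0 * (k3 * (starRingEnd ℂ) u2) := by rw [h]
        _ = k0 * k3 * (starRingEnd ℂ) u2 := by ring
  -- explicit real/imaginary parts of z_j = k_j * u_j
  have hsc1 : (Real.sin a1 : ℂ)^2 + (Real.cos a1 : ℂ)^2 = 1 := by
    exact_mod_cast Real.sin_sq_add_cos_sq a1
  have hsc2 : (Real.sin a2 : ℂ)^2 + (Real.cos a2 : ℂ)^2 = 1 := by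
    exact_mod_cast Real.sin_sq_add_cos_sq a2
  have hk1' : k1 = (Real.cos a1 : ℂ) + (Real.sin a1 : ℂ) * Complex.I := by
    rw [hk1def, Complex.exp_mul_I, ← Complex.ofReal_cos, ← Complex.ofReal_sin]
  have hk2' : k2 = (Real.cos a2 : ℂ) + (Real.sin a2 : ℂ) * Complex.I := by
    rw [hk2def, Complex.exp_mul_I, ← Complex.ofReal_cos, ← Complex.ofReal_sin]
  have hck1 : (starRingEnd ℂ) k1 = (Real.cos a1 : ℂ) - (Real.sin a1 : ℂ) * Complex.I := by
    rw [hk1', map_add, map_mul, Complex.conj_ofReal, Complex.conj_ofReal, Complex.conj_I]; ring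
  have hck2 : (starRingEnd ℂ) k2 = (Real.cos a2 : ℂ) - (Real.sin a2 : ℂ) * Complex.I := by
    rw [hk2', map_add, map_mul, Complex.conj_ofReal, Complex.conj_ofReal, Complex.conj_I]; ring
  have hz1 : k1 * u1 = ((1 + 2*(t1-1)*Real.sin a1^2 : ℝ) : ℂ)
      + ((2*(1-t1)*Real.sin a1*Real.cos a1 : ℝ) : ℂ) * Complex.I := by
    rw [hu1def, hck1, hk1']
    push_cast
    linear_combination (Complex.sin_sq_add_cos_sq (a1 : ℂ)) +
      (Complex.sin (a1:ℂ)^2 - 2*(t1:ℂ)*Complex.sin (a1:ℂ)^2) * Complex.I_sq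
  have hz2 : k2 * u2 = ((1 + 2*(t2-1)*Real.sin a2^2 : ℝ) : ℂ)
      + ((2*(1-t2)*Real.sin a2*Real.cos a2 : ℝ) : ℂ) * Complex.I := by
    rw [hu2def, hck2, hk2']
    push_cast
    linear_combination (Complex.sin_sq_add_cos_sq (a2 : ℂ)) +
      (Complex.sin (a2:ℂ)^2 - 2*(t2:ℂ)*Complex.sin (a2:ℂ)^2) * Complex.I_sq
  have hre1 : (k1 * u1).re = 1 + 2*(t1-1)*Real.sin a1^2 := by
    rw [hz1]; simp only [Complex.add_re, Complex.ofReal_re, Complex.mul_re,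
      Complex.ofReal_im, Complex.I_re, Complex.I_im, mul_zero, mul_one, zero_mul,
      sub_zero, add_zero, zero_sub]
  have him1 : (k1 * u1).im = 2*(1-t1)*Real.sin a1*Real.cos a1 := by
    rw [hz1]; simp only [Complex.add_im, Complex.ofReal_im, Complex.mul_im,
      Complex.ofReal_re, Complex.I_re, Complex.I_im, mul_zero, mul_one, zero_mul,
      sub_zero, add_zero, zero_add]
  have hre2 : (k2 * u2).re = 1 + 2*(t2-1)*Real.sin a2^2 := by
    rw [hz2]; simp only [Complex.add_re, Complex.ofReal_re, Complex.mul_re,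
      Complex.ofReal_im, Complex.I_re, Complex.I_im, mul_zero, mul_one, zero_mul,
      sub_zero, add_zero, zero_sub]
  have him2 : (k2 * u2).im = 2*(1-t2)*Real.sin a2*Real.cos a2 := by
    rw [hz2]; simp only [Complex.add_im, Complex.ofReal_im, Complex.mul_im,
      Complex.ofReal_re, Complex.I_re, Complex.I_im, mul_zero, mul_one, zero_mul,
      sub_zero, add_zero, zero_add]
  obtain ⟨θ1, hθ1a, hθ1b, hθ1c, hθ1d, hz1eq⟩ :=
    tance_aux a1 t1 h1.1 h1.2 ht1 (k1 * u1) hre1 him1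
  obtain ⟨θ2, hθ2a, hθ2b, hθ2c, hθ2d, hz2eq⟩ :=
    tance_aux a2 t2 h2.1 h2.2 ht2 (k2 * u2) hre2 him2
  set r1 : ℝ := ‖k1 * u1‖ with hr1def
  set r2 : ℝ := ‖k2 * u2‖ with hr2def
  have hr1pos : 0 < r1 := by
    have := Complex.re_le_norm (k1 * u1)
    have hs1 : 0 < Real.sin a1 := Real.sin_pos_of_pos_of_lt_pi h1.1 h1.2
    rw [hre1] at this; nlinarith
  have hr2pos : 0 < r2 := by
    have := Complex.re_le_norm (k2 * u2)
    have hs2 : 0 < Real.sin a2 := Real.sin_pos_of_pos_of_lt_pi h2.1 h2.2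
    rw [hre2] at this; nlinarith
  -- the product identity
  set S : ℝ := a0 + a1 + a2 + a3 with hSdef
  have hkprod : k0 * k1 * k2 * k3 = Complex.exp ((S : ℂ) * Complex.I) := by
    rw [hk0def, hk1def, hk2def, hk3def, ← Complex.exp_add, ← Complex.exp_add,
      ← Complex.exp_add, hSdef]; push_cast; ring_nf
  have hprod : (k1 * u1) * (k2 * u2)
      = ((Complex.normSq u2 : ℝ) : ℂ) * Complex.exp ((S : ℂ) * Complex.I) := by
    calc (k1 * u1) * (k2 * u2) = (k0 * k1 * k2 * k3) * (u2 * (starRingEnd ℂ) u2) := by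
          rw [hu1eq]; ring
      _ = (k0 * k1 * k2 * k3) * ((Complex.normSq u2 : ℝ) : ℂ) := by rw [Complex.mul_conj]
      _ = ((Complex.normSq u2 : ℝ) : ℂ) * Complex.exp ((S : ℂ) * Complex.I) := by
          rw [hkprod]; ring
  rw [hz1eq, hz2eq] at hprod
  have hprod2 : ((r1 * r2 : ℝ) : ℂ) * Complex.exp (((θ1 + θ2 : ℝ) : ℂ) * Complex.I)
      = ((Complex.normSq u2 : ℝ) : ℂ) * Complex.exp ((S : ℂ) * Complex.I) := by
    rw [← hprod, Complex.ofReal_add, add_mul, Complex.exp_add, Complex.ofReal_mul]; ring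
  have habseq : r1 * r2 = Complex.normSq u2 := by
    have h := congrArg (fun w : ℂ => ‖w‖) hprod2
    simp only [norm_mul, Complex.norm_exp_ofReal_mul_I, mul_one] at h
    rw [Complex.norm_real, Complex.norm_real, Real.norm_eq_abs, Real.norm_eq_abs] at h
    rwa [_root_.abs_of_nonneg (mul_pos hr1pos hr2pos).le,
      _root_.abs_of_nonneg (Complex.normSq_nonneg u2)] at h
  rw [← habseq] at hprod2
  have hexp_eq : Complex.exp (((θ1 + θ2 : ℝ) : ℂ) * Complex.I)
      = Complex.exp ((S : ℂ) * Complex.I) := by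
    have hne : ((r1 * r2 : ℝ) : ℂ) ≠ 0 := by
      simp only [ne_eq, Complex.ofReal_eq_zero]
      exact (mul_pos hr1pos hr2pos).ne'
    exact mul_left_cancel₀ hne hprod2
  obtain ⟨n, hn⟩ := Complex.exp_eq_exp_iff_exists_int.mp hexp_eq
  have hreal : θ1 + θ2 = S + n * (2 * π) := by
    have := congrArg Complex.im hn
    simpa using this
  have hπ := Real.pi_pos
  have h2π : (0:ℝ) < 2 * π := by linarith
  have hS0 : 0 < S := by rw [hSdef]; linarith [h0.1, h1.1, h2.1, h3.1]
  have hdiff : (n : ℝ) * (2 * π) = θ1 + θ2 - S := by linarith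
  rcases hsum with hc | hc
  · have hn0 : n = 0 := by
      have hlt : (n : ℝ) * (2 * π) < 1 * (2 * π) := by linarith
      have hgt : (-1 : ℝ) * (2 * π) < n * (2 * π) := by linarith
      have hlt' : (n : ℝ) < 1 := lt_of_mul_lt_mul_right hlt h2π.le
      have hgt' : (-1 : ℝ) < n := lt_of_mul_lt_mul_right hgt h2π.le
      have hA : (n : ℤ) < 1 := by exact_mod_cast hlt'
      have hB : (-1 : ℤ) < n := by exact_mod_cast hgt'
      omega
    rw [hn0] at hreal
    push_cast at hreal
    have hS' : a1 + a2 < S := by rw [hSdef]; linarith [h0.1, h3.1]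
    linarith
  · have hS4 : S < 4 * π := by rw [hSdef]; linarith [h0.2, h1.2, h2.2, h3.2]
    have hn2 : n = -2 := by
      have hlt : (n : ℝ) * (2 * π) < (-1) * (2 * π) := by linarith
      have hgt : (-(5:ℝ)/2) * (2 * π) < n * (2 * π) := by linarith
      have hlt' : (n : ℝ) < -1 := lt_of_mul_lt_mul_right hlt h2π.le
      have hgt' : (-(5:ℝ)/2) < n := lt_of_mul_lt_mul_right hgt h2π.le
      have hA : (n : ℤ) < -1 := by exact_mod_cast hlt'
      have hB : (-3 : ℤ) < n := by
        have : ((-3 : ℤ) : ℝ) < n := by push_cast; linarith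
        exact_mod_cast this
      omega
    rw [hn2] at hreal
    push_cast at hreal
    have h03 : a0 + a3 < 2 * π := by linarith [h0.2, h3.2]
    rw [hSdef] at hreal
    linarith
end

section
/- Let a₀, a₁, a₂, a₃ ∈ (0, π), set k_j = exp(i a_j) and u_j = t_j(conj k_j − k_j) + k_j. Then the set of solutions (t₁, t₂, t₃) ∈ [1, ∞)³ of the equation 1 − 2 Re(conj(k₀) u₁ u₂ u₃) = |u₁|² + |u₂|² + |u₃|² is compact. -/
open Complex Real

lemma keyB (s0 m D E b1 b2 b3 : ℝ) (hs0 : 0 < s0) (hs1 : s0 ≤ 1) (hm : 0 < m) (hm1 : m ≤ 1)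
    (hD : s0 * D = 5) (hE : 2*s0*m*E = 4*D + 6*s0 + 1)
    (hmb3 : m ≤ b3) (h32 : b3 ≤ b2) (h21 : b2 ≤ b1)
    (hP : 2*s0*b1*b2*b3 + (b1^2+b2^2+b3^2) ≤ 3 + 2*(b1*b2+b1*b3+b2*b3) + 2*s0*(b1+b2+b3)) :
    b1 ≤ 4*E + 2*D + 6*s0 + 3 := by
  have hb3 : 0 < b3 := lt_of_lt_of_le hm hmb3
  have hb2 : 0 < b2 := lt_of_lt_of_le hb3 h32
  have hb1 : 0 < b1 := lt_of_lt_of_le hb2 h21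
  have hD5 : 5 ≤ D := by nlinarith
  have hEeq : E = (4*D + 6*s0 + 1)/(2*s0*m) := by
    field_simp
    linarith [hE]
  have hEpos : 0 < E := hEeq ▸ div_pos (by linarith) (by positivity)
  have hsm1 : s0 * m ≤ 1 := by nlinarith
  have hE10 : 10 ≤ E := by
    nlinarith [mul_nonneg hEpos.le (sub_nonneg.2 hsm1), hE, hD5]
  have step1 : b3 ≤ D := by
    by_contra h
    push_neg at h
    have h5 : 5 < s0 * b3 := by
      calc (5:ℝ) = s0 * D := hD.symm
      _ < s0 * b3 := (mul_lt_mul_iff_right₀ hs0).2 h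
    have hb35 : 5 < b3 := by nlinarith
    nlinarith [mul_nonneg (mul_nonneg hb1.le hb2.le) (sub_nonneg.2 h5.le),
      mul_nonneg hb1.le (sub_nonneg.2 h32), mul_nonneg hb2.le (sub_nonneg.2 (le_trans h32 h21)),
      mul_nonneg (sub_nonneg.2 hs1) (by positivity : (0:ℝ) ≤ b1+b2+b3),
      mul_nonneg (by linarith : (0:ℝ) ≤ b1 - 5) (by linarith : (0:ℝ) ≤ b2 - 5),
      sq_nonneg (b1-b2)]
  have step2 : b2 ≤ E := by
    by_contra h
    push_neg at h
    have k1 : 0 ≤ (b3 - m) * (2*s0*(b1*b2)) := mul_nonneg (by linarith) (by positivity)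
    have k2 : 0 ≤ (2*s0*m*b2 - (4*D+6*s0+1)) * b1 := by
      apply mul_nonneg _ hb1.le
      nlinarith [mul_nonneg (mul_nonneg hs0.le hm.le) (sub_nonneg.2 h.le)]
    have k3 : 0 ≤ (D - b3) * (2*(b1+b2)) := mul_nonneg (by linarith) (by positivity)
    have k6 : 0 ≤ (b1 - b2) * (2*D) := mul_nonneg (by linarith) (by linarith)
    have k7 : 0 ≤ s0*(b1-b2) := mul_nonneg hs0.le (by linarith)
    have k8 : 0 ≤ s0*(b1-b3) := mul_nonneg hs0.le (by linarith)
    linarith [k1, k2, k3, k6, k7, k8, sq_nonneg (b1-b2), sq_nonneg b3, hP]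
  by_contra hg
  push_neg at hg
  have g1 : 0 < (b1 - (4*E+2*D+6*s0+3)) * b1 := mul_pos (by linarith) hb1
  have f1 : 0 ≤ 2*s0*(b1*b2*b3) := by positivity
  have f4 : 0 ≤ 2*b1*(E-b2) := mul_nonneg (by linarith) (by linarith)
  have f5 : 0 ≤ 2*b1*(D-b3) := mul_nonneg (by linarith) (by linarith)
  have f6 : 0 ≤ 2*b3*(E-b2) := mul_nonneg (by linarith) (by linarith)
  have f6' : 0 ≤ 2*E*(b1-b3) := mul_nonneg (by linarith) (by linarith)
  have f7 : 0 ≤ 2*s0*(b1-b2) := mul_nonneg (by linarith) (by linarith)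
  have f8 : 0 ≤ 2*s0*(b1-b3) := mul_nonneg (by linarith) (by linarith)
  linarith [g1, f1, sq_nonneg b2, sq_nonneg b3, f4, f5, f6, f6', f7, f8, hP]

lemma keyAll (s0 m D E b1 b2 b3 : ℝ) (hs0 : 0 < s0) (hs1 : s0 ≤ 1) (hm : 0 < m) (hm1 : m ≤ 1)
    (hD : s0 * D = 5) (hE : 2*s0*m*E = 4*D + 6*s0 + 1)
    (hmb1 : m ≤ b1) (hmb2 : m ≤ b2) (hmb3 : m ≤ b3)
    (hP : 2*s0*b1*b2*b3 + (b1^2+b2^2+b3^2) ≤ 3 + 2*(b1*b2+b1*b3+b2*b3) + 2*s0*(b1+b2+b3)) :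
    b1 ≤ 4*E + 2*D + 6*s0 + 3 ∧ b2 ≤ 4*E + 2*D + 6*s0 + 3 ∧ b3 ≤ 4*E + 2*D + 6*s0 + 3 := by
  rcases le_total b1 b2 with h12 | h12 <;> rcases le_total b2 b3 with h23 | h23 <;>
    rcases le_total b1 b3 with h13 | h13
  · have := keyB s0 m D E b3 b2 b1 hs0 hs1 hm hm1 hD hE hmb1 h12 h23 (by linarith [hP])
    exact ⟨by linarith, by linarith, by linarith⟩
  · have := keyB s0 m D E b3 b2 b1 hs0 hs1 hm hm1 hD hE hmb1 h12 h23 (by linarith [hP])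
    exact ⟨by linarith, by linarith, by linarith⟩
  · have := keyB s0 m D E b2 b3 b1 hs0 hs1 hm hm1 hD hE hmb1 h13 h23 (by linarith [hP])
    exact ⟨by linarith, by linarith, by linarith⟩
  · have := keyB s0 m D E b2 b1 b3 hs0 hs1 hm hm1 hD hE hmb3 h13 h12 (by linarith [hP])
    exact ⟨by linarith, by linarith, by linarith⟩
  · have := keyB s0 m D E b3 b1 b2 hs0 hs1 hm hm1 hD hE hmb2 h12 h13 (by linarith [hP])
    exact ⟨by linarith, by linarith, by linarith⟩
  · have := keyB s0 m D E b1 b3 b2 hs0 hs1 hm hm1 hD hE hmb2 h23 h13 (by linarith [hP])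
    exact ⟨by linarith, by linarith, by linarith⟩
  · have := keyB s0 m D E b1 b2 b3 hs0 hs1 hm hm1 hD hE hmb3 h23 h12 (by linarith [hP])
    exact ⟨by linarith, by linarith, by linarith⟩
  · have := keyB s0 m D E b1 b2 b3 hs0 hs1 hm hm1 hD hE hmb3 h23 h12 (by linarith [hP])
    exact ⟨by linarith, by linarith, by linarith⟩

lemma abscc (x y : ℝ) : |Real.cos x * Real.cos y| ≤ 1 := by
  rw [abs_mul]
  exact mul_le_one₀ (Real.abs_cos_le_one x) (abs_nonneg _) (Real.abs_cos_le_one y)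

lemma ccle (x y : ℝ) : Real.cos x * Real.cos y ≤ 1 := (abs_le.1 (abscc x y)).2

lemma quadcc (a b c d : ℝ) :
    -1 ≤ Real.cos a * Real.cos b * Real.cos c * Real.cos d := by
  have h1 := abs_le.1 (abscc a b)
  have h2 := abs_le.1 (abscc c d)
  nlinarith [h1.1, h1.2, h2.1, h2.2]

lemma reduce (a0 a1 a2 a3 t1 t2 t3 : ℝ)
    (heq :
       (let k0 : ℂ := Complex.exp (a0 * Complex.I)
       let k1 : ℂ := Complex.exp (a1 * Complex.I)
       let k2 : ℂ := Complex.exp (a2 * Complex.I)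
       let k3 : ℂ := Complex.exp (a3 * Complex.I)
       let u1 : ℂ := (t1 : ℂ) * ((starRingEnd ℂ) k1 - k1) + k1
       let u2 : ℂ := (t2 : ℂ) * ((starRingEnd ℂ) k2 - k2) + k2
       let u3 : ℂ := (t3 : ℂ) * ((starRingEnd ℂ) k3 - k3) + k3
       1 - 2 * ((starRingEnd ℂ) k0 * u1 * u2 * u3).re
         = ‖u1‖ ^ 2 + ‖u2‖ ^ 2 + ‖u3‖ ^ 2)) :
    2*Real.sin a0*(Real.sin a1*(2*t1-1))*(Real.sin a2*(2*t2-1))*(Real.sin a3*(2*t3-1))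
      + ((Real.sin a1*(2*t1-1))^2 + (Real.sin a2*(2*t2-1))^2 + (Real.sin a3*(2*t3-1))^2)
    = 1 - (Real.cos a1^2 + Real.cos a2^2 + Real.cos a3^2)
      - 2*Real.cos a0*Real.cos a1*Real.cos a2*Real.cos a3
      + 2*Real.cos a0*(Real.cos a1*(Real.sin a2*(2*t2-1))*(Real.sin a3*(2*t3-1))
        + Real.cos a2*(Real.sin a1*(2*t1-1))*(Real.sin a3*(2*t3-1))
        + Real.cos a3*(Real.sin a1*(2*t1-1))*(Real.sin a2*(2*t2-1)))
      + 2*Real.sin a0*((Real.sin a1*(2*t1-1))*Real.cos a2*Real.cos a3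
        + (Real.sin a2*(2*t2-1))*Real.cos a1*Real.cos a3
        + (Real.sin a3*(2*t3-1))*Real.cos a1*Real.cos a2) := by
  simp only [Complex.exp_mul_I, ← Complex.ofReal_cos, ← Complex.ofReal_sin, ← Complex.ofReal_pow,
    map_add, map_mul, Complex.conj_ofReal, Complex.conj_I, Complex.sq_norm, Complex.normSq_apply,
    Complex.add_re, Complex.add_im, Complex.mul_re, Complex.mul_im, Complex.sub_re, Complex.sub_im,
    Complex.ofReal_re, Complex.ofReal_im, Complex.I_re, Complex.I_im, Complex.neg_re, Complex.neg_im,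
    Complex.mul_im] at heq
  linear_combination -heq

lemma toP (a0 a1 a2 a3 t1 t2 t3 s0 b1 b2 b3 : ℝ)
    (hs0 : s0 = Real.sin a0) (hb1 : b1 = Real.sin a1*(2*t1-1))
    (hb2 : b2 = Real.sin a2*(2*t2-1)) (hb3 : b3 = Real.sin a3*(2*t3-1))
    (hb1n : 0 ≤ b1) (hb2n : 0 ≤ b2) (hb3n : 0 ≤ b3) (hs0n : 0 ≤ s0)
    (hreal : 2*Real.sin a0*(Real.sin a1*(2*t1-1))*(Real.sin a2*(2*t2-1))*(Real.sin a3*(2*t3-1))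
      + ((Real.sin a1*(2*t1-1))^2 + (Real.sin a2*(2*t2-1))^2 + (Real.sin a3*(2*t3-1))^2)
    = 1 - (Real.cos a1^2 + Real.cos a2^2 + Real.cos a3^2)
      - 2*Real.cos a0*Real.cos a1*Real.cos a2*Real.cos a3
      + 2*Real.cos a0*(Real.cos a1*(Real.sin a2*(2*t2-1))*(Real.sin a3*(2*t3-1))
        + Real.cos a2*(Real.sin a1*(2*t1-1))*(Real.sin a3*(2*t3-1))
        + Real.cos a3*(Real.sin a1*(2*t1-1))*(Real.sin a2*(2*t2-1)))
      + 2*Real.sin a0*((Real.sin a1*(2*t1-1))*Real.cos a2*Real.cos a3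
        + (Real.sin a2*(2*t2-1))*Real.cos a1*Real.cos a3
        + (Real.sin a3*(2*t3-1))*Real.cos a1*Real.cos a2)) :
    2*s0*b1*b2*b3 + (b1^2+b2^2+b3^2) ≤ 3 + 2*(b1*b2+b1*b3+b2*b3) + 2*s0*(b1+b2+b3) := by
  subst hs0 hb1 hb2 hb3
  have w1 : 0 ≤ (1 - Real.cos a0*Real.cos a1)*(2*((Real.sin a2*(2*t2-1))*(Real.sin a3*(2*t3-1)))) :=
    mul_nonneg (by linarith [ccle a0 a1]) (by positivity)
  have w2 : 0 ≤ (1 - Real.cos a0*Real.cos a2)*(2*((Real.sin a1*(2*t1-1))*(Real.sin a3*(2*t3-1)))) :=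
    mul_nonneg (by linarith [ccle a0 a2]) (by positivity)
  have w3 : 0 ≤ (1 - Real.cos a0*Real.cos a3)*(2*((Real.sin a1*(2*t1-1))*(Real.sin a2*(2*t2-1)))) :=
    mul_nonneg (by linarith [ccle a0 a3]) (by positivity)
  have w4 : 0 ≤ (1 - Real.cos a2*Real.cos a3)*(2*(Real.sin a0*(Real.sin a1*(2*t1-1)))) :=
    mul_nonneg (by linarith [ccle a2 a3]) (by positivity)
  have w5 : 0 ≤ (1 - Real.cos a1*Real.cos a3)*(2*(Real.sin a0*(Real.sin a2*(2*t2-1)))) :=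
    mul_nonneg (by linarith [ccle a1 a3]) (by positivity)
  have w6 : 0 ≤ (1 - Real.cos a1*Real.cos a2)*(2*(Real.sin a0*(Real.sin a3*(2*t3-1)))) :=
    mul_nonneg (by linarith [ccle a1 a2]) (by positivity)
  have w7 := quadcc a0 a1 a2 a3
  linarith [hreal, w1, w2, w3, w4, w5, w6, w7,
    sq_nonneg (Real.cos a1), sq_nonneg (Real.cos a2), sq_nonneg (Real.cos a3)]

set_option maxHeartbeats 4000000 in
theorem stmt3 (a0 a1 a2 a3 : ℝ)
    (h0 : a0 ∈ Set.Ioo 0 π) (h1 : a1 ∈ Set.Ioo 0 π)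
    (h2 : a2 ∈ Set.Ioo 0 π) (h3 : a3 ∈ Set.Ioo 0 π) :
    IsCompact {p : ℝ × ℝ × ℝ |
      1 ≤ p.1 ∧ 1 ≤ p.2.1 ∧ 1 ≤ p.2.2 ∧
      (let k0 : ℂ := Complex.exp (a0 * Complex.I)
       let k1 : ℂ := Complex.exp (a1 * Complex.I)
       let k2 : ℂ := Complex.exp (a2 * Complex.I)
       let k3 : ℂ := Complex.exp (a3 * Complex.I)
       let u1 : ℂ := (p.1 : ℂ) * ((starRingEnd ℂ) k1 - k1) + k1
       let u2 : ℂ := (p.2.1 : ℂ) * ((starRingEnd ℂ) k2 - k2) + k2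
       let u3 : ℂ := (p.2.2 : ℂ) * ((starRingEnd ℂ) k3 - k3) + k3
       1 - 2 * ((starRingEnd ℂ) k0 * u1 * u2 * u3).re
         = ‖u1‖ ^ 2 + ‖u2‖ ^ 2 + ‖u3‖ ^ 2)} := by
  have hs0 : 0 < Real.sin a0 := Real.sin_pos_of_pos_of_lt_pi h0.1 h0.2
  have hs1 : 0 < Real.sin a1 := Real.sin_pos_of_pos_of_lt_pi h1.1 h1.2
  have hs2 : 0 < Real.sin a2 := Real.sin_pos_of_pos_of_lt_pi h2.1 h2.2
  have hs3 : 0 < Real.sin a3 := Real.sin_pos_of_pos_of_lt_pi h3.1 h3.2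
  set s0 : ℝ := Real.sin a0 with hs0def
  set m : ℝ := min (Real.sin a1) (min (Real.sin a2) (Real.sin a3)) with hmdef
  have hm : 0 < m := lt_min hs1 (lt_min hs2 hs3)
  have hm1 : m ≤ 1 := le_trans (min_le_left _ _) (Real.sin_le_one a1)
  have hs0le : s0 ≤ 1 := Real.sin_le_one a0
  set D : ℝ := 5 / s0 with hDdef
  have hD : s0 * D = 5 := by rw [hDdef]; field_simp
  set E : ℝ := (4*D + 6*s0 + 1)/(2*s0*m) with hEdef
  have hE : 2*s0*m*E = 4*D + 6*s0 + 1 := by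
    rw [hEdef]; field_simp
  set B : ℝ := 4*E + 2*D + 6*s0 + 3 with hBdef
  set R : ℝ := (B/m + 1)/2 with hRdef
  apply IsCompact.of_isClosed_subset
    (isCompact_Icc : IsCompact (Set.Icc ((1:ℝ),(1:ℝ),(1:ℝ)) (R,R,R)))
  · -- closedness
    have : {p : ℝ × ℝ × ℝ |
      1 ≤ p.1 ∧ 1 ≤ p.2.1 ∧ 1 ≤ p.2.2 ∧
      (let k0 : ℂ := Complex.exp (a0 * Complex.I)
       let k1 : ℂ := Complex.exp (a1 * Complex.I)
       let k2 : ℂ := Complex.exp (a2 * Complex.I)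
       let k3 : ℂ := Complex.exp (a3 * Complex.I)
       let u1 : ℂ := (p.1 : ℂ) * ((starRingEnd ℂ) k1 - k1) + k1
       let u2 : ℂ := (p.2.1 : ℂ) * ((starRingEnd ℂ) k2 - k2) + k2
       let u3 : ℂ := (p.2.2 : ℂ) * ((starRingEnd ℂ) k3 - k3) + k3
       1 - 2 * ((starRingEnd ℂ) k0 * u1 * u2 * u3).re
         = ‖u1‖ ^ 2 + ‖u2‖ ^ 2 + ‖u3‖ ^ 2)}
      = {p : ℝ × ℝ × ℝ | 1 ≤ p.1} ∩ ({p | 1 ≤ p.2.1} ∩ ({p | 1 ≤ p.2.2} ∩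
        {p : ℝ × ℝ × ℝ |
       1 - 2 * ((starRingEnd ℂ) (Complex.exp (a0 * Complex.I)) *
           ((p.1 : ℂ) * ((starRingEnd ℂ) (Complex.exp (a1 * Complex.I)) - Complex.exp (a1 * Complex.I)) + Complex.exp (a1 * Complex.I)) *
           ((p.2.1 : ℂ) * ((starRingEnd ℂ) (Complex.exp (a2 * Complex.I)) - Complex.exp (a2 * Complex.I)) + Complex.exp (a2 * Complex.I)) *
           ((p.2.2 : ℂ) * ((starRingEnd ℂ) (Complex.exp (a3 * Complex.I)) - Complex.exp (a3 * Complex.I)) + Complex.exp (a3 * Complex.I))).re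
         = ‖((p.1 : ℂ) * ((starRingEnd ℂ) (Complex.exp (a1 * Complex.I)) - Complex.exp (a1 * Complex.I)) + Complex.exp (a1 * Complex.I))‖ ^ 2
         + ‖((p.2.1 : ℂ) * ((starRingEnd ℂ) (Complex.exp (a2 * Complex.I)) - Complex.exp (a2 * Complex.I)) + Complex.exp (a2 * Complex.I))‖ ^ 2
         + ‖((p.2.2 : ℂ) * ((starRingEnd ℂ) (Complex.exp (a3 * Complex.I)) - Complex.exp (a3 * Complex.I)) + Complex.exp (a3 * Complex.I))‖ ^ 2})) := rfl
    rw [this]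
    refine IsClosed.inter (isClosed_le continuous_const continuous_fst) ?_
    refine IsClosed.inter (isClosed_le continuous_const (continuous_fst.comp continuous_snd)) ?_
    refine IsClosed.inter (isClosed_le continuous_const (continuous_snd.comp continuous_snd)) ?_
    have cu1 : Continuous fun p : ℝ×ℝ×ℝ => (p.1:ℂ) * ((starRingEnd ℂ) (Complex.exp (a1 * Complex.I)) - Complex.exp (a1 * Complex.I)) + Complex.exp (a1 * Complex.I) := by fun_prop
    have cu2 : Continuous fun p : ℝ×ℝ×ℝ => (p.2.1:ℂ) * ((starRingEnd ℂ) (Complex.exp (a2 * Complex.I)) - Complex.exp (a2 * Complex.I)) + Complex.exp (a2 * Complex.I) := by fun_prop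
    have cu3 : Continuous fun p : ℝ×ℝ×ℝ => (p.2.2:ℂ) * ((starRingEnd ℂ) (Complex.exp (a3 * Complex.I)) - Complex.exp (a3 * Complex.I)) + Complex.exp (a3 * Complex.I) := by fun_prop
    apply isClosed_eq
    · exact continuous_const.sub (continuous_const.mul (Complex.continuous_re.comp
        (((continuous_const.mul cu1).mul cu2).mul cu3)))
    · exact (((continuous_norm.comp cu1).pow 2).add
        ((continuous_norm.comp cu2).pow 2)).add ((continuous_norm.comp cu3).pow 2)
  · -- subset
    rintro p ⟨ht1, ht2, ht3, heq⟩
    have hreal := reduce a0 a1 a2 a3 p.1 p.2.1 p.2.2 heq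
    clear heq
    have e1 : (0:ℝ) ≤ Real.sin a1 * (2*p.1 - 2) := mul_nonneg hs1.le (by linarith)
    have e2 : (0:ℝ) ≤ Real.sin a2 * (2*p.2.1 - 2) := mul_nonneg hs2.le (by linarith)
    have e3 : (0:ℝ) ≤ Real.sin a3 * (2*p.2.2 - 2) := mul_nonneg hs3.le (by linarith)
    have hb1n : (0:ℝ) ≤ Real.sin a1*(2*p.1-1) := by linarith
    have hb2n : (0:ℝ) ≤ Real.sin a2*(2*p.2.1-1) := by linarith
    have hb3n : (0:ℝ) ≤ Real.sin a3*(2*p.2.2-1) := by linarith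
    have hP := toP a0 a1 a2 a3 p.1 p.2.1 p.2.2 s0
      (Real.sin a1*(2*p.1-1)) (Real.sin a2*(2*p.2.1-1)) (Real.sin a3*(2*p.2.2-1))
      rfl rfl rfl rfl hb1n hb2n hb3n hs0.le hreal
    clear hreal
    have hm1' : m ≤ Real.sin a1 := min_le_left _ _
    have hm2' : m ≤ Real.sin a2 := le_trans (min_le_right _ _) (min_le_left _ _)
    have hm3' : m ≤ Real.sin a3 := le_trans (min_le_right _ _) (min_le_right _ _)
    have hmb1 : m ≤ Real.sin a1*(2*p.1-1) := by linarith
    have hmb2 : m ≤ Real.sin a2*(2*p.2.1-1) := by linarith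
    have hmb3 : m ≤ Real.sin a3*(2*p.2.2-1) := by linarith
    obtain ⟨hB1, hB2, hB3⟩ := keyAll s0 m D E _ _ _ hs0 hs0le hm hm1 hD hE hmb1 hmb2 hmb3 hP
    have g1 : (0:ℝ) ≤ (Real.sin a1 - m) * (2*p.1 - 1) := mul_nonneg (by linarith) (by linarith)
    have g2 : (0:ℝ) ≤ (Real.sin a2 - m) * (2*p.2.1 - 1) := mul_nonneg (by linarith) (by linarith)
    have g3 : (0:ℝ) ≤ (Real.sin a3 - m) * (2*p.2.2 - 1) := mul_nonneg (by linarith) (by linarith)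
    have hr1 : p.1 ≤ R := by
      have : 2*p.1 - 1 ≤ B/m := (le_div_iff₀ hm).2 (by nlinarith [g1, hB1])
      rw [hRdef]; linarith
    have hr2 : p.2.1 ≤ R := by
      have : 2*p.2.1 - 1 ≤ B/m := (le_div_iff₀ hm).2 (by nlinarith [g2, hB2])
      rw [hRdef]; linarith
    have hr3 : p.2.2 ≤ R := by
      have : 2*p.2.2 - 1 ≤ B/m := (le_div_iff₀ hm).2 (by nlinarith [g3, hB3])
      rw [hRdef]; linarith
    simp only [Set.mem_Icc, Prod.le_def]
    exact ⟨⟨ht1, ht2, ht3⟩, hr1, hr2, hr3⟩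
end

section
/- Let a₀, a₁, a₂, a₃ ∈ (0, π) with k_j = exp(i a_j), and write s_j = sin a_j, b_j = cos a_j, x_j = s_j(2t_j − 1) with t_j ≥ 1 (so x_j ≥ s_j > 0). Then the equation 1 − 2 Re(conj(k₀) u₁ u₂ u₃) = |u₁|² + |u₂|² + |u₃|², where u_j = t_j(conj k_j − k_j) + k_j, is equivalent to x₁² + 2p(x₂,x₃)x₁ + q(x₂,x₃) = 0, where p(x₂,x₃) = s₀x₂x₃ − b₀b₃x₂ − b₀b₂x₃ − s₀b₂b₃ and q(x₂,x₃) = x₂² − 2b₀b₁x₂x₃ + x₃² − 2s₀b₁b₃x₂ − 2s₀b₁b₂x₃ + 2b₀b₁b₂b₃ + b₁² + b₂² + b₃² − 1. -/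
open Complex Real


set_option maxHeartbeats 1000000 in
theorem stmt4 (a0 a1 a2 a3 : ℝ)
    (h0 : a0 ∈ Set.Ioo 0 π) (h1 : a1 ∈ Set.Ioo 0 π)
    (h2 : a2 ∈ Set.Ioo 0 π) (h3 : a3 ∈ Set.Ioo 0 π)
    (t1 t2 t3 : ℝ) (ht1 : 1 ≤ t1) (ht2 : 1 ≤ t2) (ht3 : 1 ≤ t3) :
    (let k0 : ℂ := Complex.exp (a0 * Complex.I)
     let k1 : ℂ := Complex.exp (a1 * Complex.I)
     let k2 : ℂ := Complex.exp (a2 * Complex.I)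
     let k3 : ℂ := Complex.exp (a3 * Complex.I)
     let u1 : ℂ := (t1 : ℂ) * ((starRingEnd ℂ) k1 - k1) + k1
     let u2 : ℂ := (t2 : ℂ) * ((starRingEnd ℂ) k2 - k2) + k2
     let u3 : ℂ := (t3 : ℂ) * ((starRingEnd ℂ) k3 - k3) + k3
     1 - 2 * ((starRingEnd ℂ) k0 * u1 * u2 * u3).re
       = ‖u1‖ ^ 2 + ‖u2‖ ^ 2 + ‖u3‖ ^ 2) ↔
    (let s0 := Real.sin a0
     let s1 := Real.sin a1
     let s2 := Real.sin a2
     let s3 := Real.sin a3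
     let b0 := Real.cos a0
     let b1 := Real.cos a1
     let b2 := Real.cos a2
     let b3 := Real.cos a3
     let x1 := s1 * (2 * t1 - 1)
     let x2 := s2 * (2 * t2 - 1)
     let x3 := s3 * (2 * t3 - 1)
     x1 ^ 2
       + 2 * (s0 * x2 * x3 - b0 * b3 * x2 - b0 * b2 * x3 - s0 * b2 * b3) * x1
       + (x2 ^ 2 - 2 * b0 * b1 * x2 * x3 + x3 ^ 2 - 2 * s0 * b1 * b3 * x2
          - 2 * s0 * b1 * b2 * x3 + 2 * b0 * b1 * b2 * b3
          + b1 ^ 2 + b2 ^ 2 + b3 ^ 2 - 1) = 0) := by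
  simp only [Complex.sq_norm, Complex.exp_mul_I, Complex.normSq_apply]
  simp only [Complex.add_re, Complex.mul_re, Complex.mul_im, Complex.sub_re,
    Complex.sub_im, Complex.add_im, Complex.ofReal_re, Complex.ofReal_im,
    Complex.I_re, Complex.I_im, Complex.conj_re, Complex.conj_im,
    Complex.sq_norm, Complex.normSq_apply, Complex.cos_ofReal_re,
    Complex.sin_ofReal_re, Complex.cos_ofReal_im, Complex.sin_ofReal_im]
  constructor <;> intro h
  · linear_combination -h
  · linear_combination -h
end

section
/- Let a₀, a₁, a₂, a₃ ∈ (0, π) with a₀ + a₁ + a₂ + a₃ ≤ π, and set k_j = exp(i a_j), s = sin(a₀+a₃), b = cos(a₀+a₃), s_j = sin a_j, b_j = cos a_j for j = 1, 2. Suppose t₁, t₂ are real numbers such that u₂ = conj(u₁) k₀ k₃, where u_j = t_j(conj k_j − k_j) + k_j. Then 2t₁ − 1 = (b₁b − b₂)/(s₁ s) and 2t₂ − 1 = (b₂b − b₁)/(s₂ s), and it cannot happen that both t₁ ≥ 1 and t₂ ≥ 1. -/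
open Complex Real

theorem stmt8 (a0 a1 a2 a3 : ℝ)
    (h0 : a0 ∈ Set.Ioo 0 π) (h1 : a1 ∈ Set.Ioo 0 π)
    (h2 : a2 ∈ Set.Ioo 0 π) (h3 : a3 ∈ Set.Ioo 0 π)
    (hsum : a0 + a1 + a2 + a3 ≤ π)
    (t1 t2 : ℝ)
    (hu : (t2 : ℂ) * ((starRingEnd ℂ) (Complex.exp (a2 * Complex.I)) - Complex.exp (a2 * Complex.I))
            + Complex.exp (a2 * Complex.I)
          = (starRingEnd ℂ) ((t1 : ℂ) * ((starRingEnd ℂ) (Complex.exp (a1 * Complex.I))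
                - Complex.exp (a1 * Complex.I)) + Complex.exp (a1 * Complex.I))
            * Complex.exp (a0 * Complex.I) * Complex.exp (a3 * Complex.I)) :
    2 * t1 - 1 = (Real.cos a1 * Real.cos (a0 + a3) - Real.cos a2) / (Real.sin a1 * Real.sin (a0 + a3)) ∧
    2 * t2 - 1 = (Real.cos a2 * Real.cos (a0 + a3) - Real.cos a1) / (Real.sin a2 * Real.sin (a0 + a3)) ∧
    ¬ (1 ≤ t1 ∧ 1 ≤ t2) := by
  obtain ⟨h0a, h0b⟩ := h0
  obtain ⟨h1a, h1b⟩ := h1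
  obtain ⟨h2a, h2b⟩ := h2
  obtain ⟨h3a, h3b⟩ := h3
  have hσpos : 0 < a0 + a3 := by linarith
  have hσlt : a0 + a3 < π := by linarith
  have hs : 0 < Real.sin (a0 + a3) := Real.sin_pos_of_pos_of_lt_pi hσpos hσlt
  have hs1 : 0 < Real.sin a1 := Real.sin_pos_of_pos_of_lt_pi h1a h1b
  have hs2 : 0 < Real.sin a2 := Real.sin_pos_of_pos_of_lt_pi h2a h2b
  simp only [Complex.exp_mul_I] at hu
  rw [Complex.ext_iff] at hu
  simp only [Complex.add_re, Complex.add_im, Complex.mul_re, Complex.mul_im, Complex.sub_re,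
    Complex.sub_im, Complex.conj_re, Complex.conj_im, Complex.I_re, Complex.I_im,
    Complex.ofReal_re, Complex.ofReal_im,
    Complex.cos_ofReal_re, Complex.cos_ofReal_im, Complex.sin_ofReal_re,
    Complex.sin_ofReal_im] at hu
  obtain ⟨hre, him⟩ := hu
  ring_nf at hre him
  have pa0 : Real.sin a0 ^ 2 + Real.cos a0 ^ 2 = 1 := Real.sin_sq_add_cos_sq a0
  have pa3 : Real.sin a3 ^ 2 + Real.cos a3 ^ 2 = 1 := Real.sin_sq_add_cos_sq a3
  have e1 : 2 * t1 - 1 = (Real.cos a1 * Real.cos (a0 + a3) - Real.cos a2) /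
      (Real.sin a1 * Real.sin (a0 + a3)) := by
    rw [eq_div_iff (by positivity), Real.cos_add, Real.sin_add]
    linear_combination hre
  have e2 : 2 * t2 - 1 = (Real.cos a2 * Real.cos (a0 + a3) - Real.cos a1) /
      (Real.sin a2 * Real.sin (a0 + a3)) := by
    rw [eq_div_iff (by positivity), Real.cos_add, Real.sin_add]
    linear_combination (-(Real.sin a0 * Real.cos a3 + Real.cos a0 * Real.sin a3)) * him
      - (Real.cos a0 * Real.cos a3 - Real.sin a0 * Real.sin a3) * hre
      - Real.cos a1 * (Real.sin a3 ^ 2 + Real.cos a3 ^ 2) * pa0 - Real.cos a1 * pa3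
  refine ⟨e1, e2, ?_⟩
  rintro ⟨ht1, ht2⟩
  -- t1 ≥ 1 forces cos (a1 + (a0+a3)) ≥ cos a2, hence a1 + (a0+a3) ≤ a2
  have k1 : Real.cos a2 ≤ Real.cos (a1 + (a0 + a3)) := by
    have h' : 1 ≤ (Real.cos a1 * Real.cos (a0 + a3) - Real.cos a2) /
        (Real.sin a1 * Real.sin (a0 + a3)) := by rw [← e1]; linarith
    rw [le_div_iff₀ (by positivity)] at h'
    rw [Real.cos_add]
    nlinarith
  have k2 : Real.cos a1 ≤ Real.cos (a2 + (a0 + a3)) := by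
    have h' : 1 ≤ (Real.cos a2 * Real.cos (a0 + a3) - Real.cos a1) /
        (Real.sin a2 * Real.sin (a0 + a3)) := by rw [← e2]; linarith
    rw [le_div_iff₀ (by positivity)] at h'
    rw [Real.cos_add]
    nlinarith
  have m1 : a1 + (a0 + a3) ≤ a2 := by
    by_contra hlt
    push_neg at hlt
    have := Real.strictAntiOn_cos ⟨le_of_lt h2a, by linarith⟩
      ⟨by positivity, by linarith⟩ hlt
    linarith
  have m2 : a2 + (a0 + a3) ≤ a1 := by
    by_contra hlt
    push_neg at hlt
    have := Real.strictAntiOn_cos ⟨le_of_lt h1a, by linarith⟩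
      ⟨by positivity, by linarith⟩ hlt
    linarith
  linarith
end

section
/- Let k₀,k₁,k₂,k₃ ∈ ℂ with |k_j| = 1, let V be a 2-dimensional hermitian space, and let c₀,c₁,c₂,c₃ ∈ V with ⟨c_j,c_j⟩ = 1. Set t₁ = ta(c₀,c₁), t₂ = ta(R_{c₁,k₁}c₀, c₂), t₃ = ta(c₀,c₃). If R_{c₃,k₃}R_{c₂,k₂}R_{c₁,k₁}R_{c₀,k₀} = 1 in SU(V), then the determinant of the 3×3 matrix M with rows [1, t₃(k₃ − conj k₃) + conj k₃, (t₂(conj k₂ − k₂) + k₂) conj k₀], [t₃(conj k₃ − k₃) + k₃, 1, t₁(k₁ − conj k₁) + conj k₁], [(t₂(k₂ − conj k₂) + conj k₂) k₀, t₁(conj k₁ − k₁) + k₁, 1] vanishes. -/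
open Complex Matrix

variable {V : Type*} [AddCommGroup V] [Module ℂ V]

/-- The rotation `R_{c,k} : p ↦ (conj k − k)(⟨p,c⟩/⟨c,c⟩)c + k p`, where the hermitian
form `B` is linear in its first and conjugate-linear in its second argument. -/
noncomputable def rot (B : V →ₗ[ℂ] V →ₗ⋆[ℂ] ℂ) (c : V) (k : ℂ) : V →ₗ[ℂ] V where
  toFun p := (((starRingEnd ℂ) k - k) * (B p c / B c c)) • c + k • p
  map_add' p q := by
    simp only [map_add, LinearMap.add_apply, add_div, mul_add, add_smul, smul_add]
    module
  map_smul' a p := by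
    simp only [_root_.map_smul, LinearMap.smul_apply, smul_eq_mul, RingHom.id_apply,
      mul_div_assoc]
    match_scalars <;> ring

/-- The tance `ta(p,q) = ⟨p,q⟩⟨q,p⟩/(⟨p,p⟩⟨q,q⟩)`. -/
noncomputable def tance (B : V →ₗ[ℂ] V →ₗ⋆[ℂ] ℂ) (p q : V) : ℂ :=
  (B p q * B q p) / (B p p * B q q)

lemma rot_left (B : V →ₗ[ℂ] V →ₗ⋆[ℂ] ℂ) (c : V) (hc : B c c = 1) (k : ℂ) (x y : V) :
    B (rot B c k x) y = ((starRingEnd ℂ) k - k) * B x c * B c y + k * B x y := by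
  simp only [rot, LinearMap.coe_mk, AddHom.coe_mk, hc, div_one, map_add,
    _root_.map_smul, LinearMap.add_apply, LinearMap.smul_apply, smul_eq_mul]

lemma rot_right (B : V →ₗ[ℂ] V →ₗ⋆[ℂ] ℂ)
    (hherm : ∀ x y, B y x = (starRingEnd ℂ) (B x y))
    (c : V) (hc : B c c = 1) (k : ℂ) (x y : V) :
    B x (rot B c k y) = (k - (starRingEnd ℂ) k) * B c y * B x c
      + (starRingEnd ℂ) k * B x y := by
  rw [hherm (rot B c k y) x, rot_left B c hc k y x]
  simp only [map_add, _root_.map_mul, map_sub, Complex.conj_conj, ← hherm]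

lemma rot_isom (B : V →ₗ[ℂ] V →ₗ⋆[ℂ] ℂ)
    (hherm : ∀ x y, B y x = (starRingEnd ℂ) (B x y))
    (c : V) (hc : B c c = 1) (k : ℂ) (hk : k * (starRingEnd ℂ) k = 1) (x y : V) :
    B (rot B c k x) (rot B c k y) = B x y := by
  rw [rot_left B c hc, rot_right B hherm c hc, rot_right B hherm c hc, hc]
  linear_combination B x y * hk

lemma rot_inv (B : V →ₗ[ℂ] V →ₗ⋆[ℂ] ℂ) (c : V) (hc : B c c = 1) (k : ℂ)
    (hk : k * (starRingEnd ℂ) k = 1) (x : V) :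
    rot B c ((starRingEnd ℂ) k) (rot B c k x) = x := by
  have h : rot B c ((starRingEnd ℂ) k) (rot B c k x) = (k * (starRingEnd ℂ) k) • x := by
    simp only [rot, LinearMap.coe_mk, AddHom.coe_mk, hc, div_one, map_add,
      _root_.map_smul, LinearMap.add_apply, LinearMap.smul_apply, smul_eq_mul,
      Complex.conj_conj]
    module
  rw [h, hk, one_smul]

lemma gram_det_zero [FiniteDimensional ℂ V] (hdim : Module.finrank ℂ V = 2)
    (B : V →ₗ[ℂ] V →ₗ⋆[ℂ] ℂ) (p : Fin 3 → V) :
    (Matrix.of fun i j => B (p i) (p j)).det = 0 := by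
  have hdep : ¬ LinearIndependent ℂ p := by
    intro h
    have := h.fintype_card_le_finrank
    rw [hdim, Fintype.card_fin] at this
    omega
  obtain ⟨g, hg, i, hgi⟩ := Fintype.not_linearIndependent_iff.mp hdep
  rw [← Matrix.exists_vecMul_eq_zero_iff]
  refine ⟨g, fun h => hgi (congrFun h i), ?_⟩
  funext j
  have h0 : B (∑ i, g i • p i) (p j) = 0 := by rw [hg]; simp
  simp only [map_sum, LinearMap.sum_apply, _root_.map_smul, LinearMap.smul_apply,
    smul_eq_mul] at h0
  simpa [Matrix.vecMul, dotProduct] using h0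

theorem stmt12 [FiniteDimensional ℂ V] (hdim : Module.finrank ℂ V = 2)
    (B : V →ₗ[ℂ] V →ₗ⋆[ℂ] ℂ) (hherm : ∀ x y, B y x = (starRingEnd ℂ) (B x y))
    (k0 k1 k2 k3 : ℂ)
    (hk0 : ‖k0‖ = 1) (hk1 : ‖k1‖ = 1)
    (hk2 : ‖k2‖ = 1) (hk3 : ‖k3‖ = 1)
    (c0 c1 c2 c3 : V)
    (hc0 : B c0 c0 = 1) (hc1 : B c1 c1 = 1) (hc2 : B c2 c2 = 1) (hc3 : B c3 c3 = 1)
    (t1 t2 t3 : ℂ)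
    (ht1 : t1 = tance B c0 c1) (ht2 : t2 = tance B (rot B c1 k1 c0) c2)
    (ht3 : t3 = tance B c0 c3)
    (hrel : (rot B c3 k3) ∘ₗ (rot B c2 k2) ∘ₗ (rot B c1 k1) ∘ₗ (rot B c0 k0)
              = LinearMap.id) :
    Matrix.det
      !![1, t3 * (k3 - (starRingEnd ℂ) k3) + (starRingEnd ℂ) k3,
           (t2 * ((starRingEnd ℂ) k2 - k2) + k2) * (starRingEnd ℂ) k0;
         t3 * ((starRingEnd ℂ) k3 - k3) + k3, 1,
           t1 * (k1 - (starRingEnd ℂ) k1) + (starRingEnd ℂ) k1;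
         (t2 * (k2 - (starRingEnd ℂ) k2) + (starRingEnd ℂ) k2) * k0,
           t1 * ((starRingEnd ℂ) k1 - k1) + k1, 1] = 0 := by
  have unit : ∀ k : ℂ, ‖k‖ = 1 → k * (starRingEnd ℂ) k = 1 := by
    intro k hk
    rw [Complex.mul_conj, Complex.normSq_eq_norm_sq, hk]
    norm_num
  have m0 := unit k0 hk0
  have m1 := unit k1 hk1
  have m2 := unit k2 hk2
  have m3 := unit k3 hk3
  have m3' : (starRingEnd ℂ) k3 * (starRingEnd ℂ) ((starRingEnd ℂ) k3) = 1 := by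
    rw [Complex.conj_conj, mul_comm]; exact m3
  set p1 : V := rot B c3 ((starRingEnd ℂ) k3) c0 with hp1def
  set p3 : V := rot B c1 k1 c0 with hp3def
  have hp3 : B p3 p3 = 1 := by
    rw [hp3def, rot_isom B hherm c1 hc1 k1 m1, hc0]
  have hp1 : B p1 p1 = 1 := by
    rw [hp1def, rot_isom B hherm c3 hc3 _ m3', hc0]
  have ht1' : t1 = B c0 c1 * B c1 c0 := by
    rw [ht1]; unfold tance; rw [hc0, hc1]; simp
  have ht3' : t3 = B c0 c3 * B c3 c0 := by
    rw [ht3]; unfold tance; rw [hc0, hc3]; simp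
  have ht2' : t2 = B p3 c2 * B c2 p3 := by
    rw [ht2]; unfold tance; rw [hp3, hc2]; simp
  -- the relation gives p1 = conj k0 • rot B c2 k2 p3
  have hq : p1 = ((starRingEnd ℂ) k0) • (rot B c2 k2 p3) := by
    have h := LinearMap.congr_fun hrel c0
    simp only [LinearMap.comp_apply, LinearMap.id_apply] at h
    have h0 : rot B c0 k0 c0 = ((starRingEnd ℂ) k0) • c0 := by
      simp only [rot, LinearMap.coe_mk, AddHom.coe_mk, hc0, div_one]
      module
    rw [h0, _root_.map_smul, _root_.map_smul] at h
    have h2 := congrArg (rot B c3 ((starRingEnd ℂ) k3)) h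
    rwa [rot_inv B c3 hc3 k3 m3, ← hp1def, eq_comm] at h2
  -- entries
  have e01 : B p1 c0 = t3 * (k3 - (starRingEnd ℂ) k3) + (starRingEnd ℂ) k3 := by
    rw [hp1def, rot_left B c3 hc3, Complex.conj_conj, hc0, ht3']; ring
  have e10 : B c0 p1 = t3 * ((starRingEnd ℂ) k3 - k3) + k3 := by
    rw [hp1def, rot_right B hherm c3 hc3, Complex.conj_conj, hc0, ht3']; ring
  have e12 : B c0 p3 = t1 * (k1 - (starRingEnd ℂ) k1) + (starRingEnd ℂ) k1 := by
    rw [hp3def, rot_right B hherm c1 hc1, hc0, ht1']; ring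
  have e21 : B p3 c0 = t1 * ((starRingEnd ℂ) k1 - k1) + k1 := by
    rw [hp3def, rot_left B c1 hc1, hc0, ht1']; ring
  have e02 : B p1 p3 = (t2 * ((starRingEnd ℂ) k2 - k2) + k2) * (starRingEnd ℂ) k0 := by
    rw [hq, _root_.map_smul, LinearMap.smul_apply, smul_eq_mul,
      rot_left B c2 hc2, hp3, ht2']; ring
  have e20 : B p3 p1 = (t2 * (k2 - (starRingEnd ℂ) k2) + (starRingEnd ℂ) k2) * k0 := by
    rw [hq, LinearMap.map_smulₛₗ, smul_eq_mul, Complex.conj_conj,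
      rot_right B hherm c2 hc2, hp3, ht2']; ring
  have hM : (!![1, t3 * (k3 - (starRingEnd ℂ) k3) + (starRingEnd ℂ) k3,
           (t2 * ((starRingEnd ℂ) k2 - k2) + k2) * (starRingEnd ℂ) k0;
         t3 * ((starRingEnd ℂ) k3 - k3) + k3, 1,
           t1 * (k1 - (starRingEnd ℂ) k1) + (starRingEnd ℂ) k1;
         (t2 * (k2 - (starRingEnd ℂ) k2) + (starRingEnd ℂ) k2) * k0,
           t1 * ((starRingEnd ℂ) k1 - k1) + k1, 1] : Matrix (Fin 3) (Fin 3) ℂ)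
      = Matrix.of (fun i j => B (![p1, c0, p3] i) (![p1, c0, p3] j)) := by
    ext i j
    fin_cases i <;> fin_cases j <;>
      simp [e01, e02, e10, e12, e20, e21, hp1, hp3, hc0]
  rw [hM]
  exact gram_det_zero hdim B _
end

section
/- Let p₁, p₂, p₃ be three points of the hyperbolic plane (or of any metric space in which any point equidistant from three pairwise distinct points is unique, e.g. the hyperbolic plane B(V)) that are pairwise distinct. Then there exists at most one point c with dist(c, p₁) = dist(c, p₂) = dist(c, p₃). -/
open Real UpperHalfPlane

private lemma equi_poly (c p q : UpperHalfPlane) (h : dist c p = dist c q) :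
    ((c.re - p.re) ^ 2 + (c.im - p.im) ^ 2) * q.im
      = ((c.re - q.re) ^ 2 + (c.im - q.im) ^ 2) * p.im := by
  rw [UpperHalfPlane.dist_eq, UpperHalfPlane.dist_eq] at h
  have h2 := Real.arsinh_injective (mul_left_cancel₀ two_ne_zero h)
  have hc := c.im_pos
  have hp := p.im_pos
  have hq := q.im_pos
  rw [div_eq_div_iff (by positivity) (by positivity)] at h2
  have h4 := congrArg (· ^ 2) h2
  simp only [mul_pow] at h4
  rw [Real.sq_sqrt (by positivity : (0:ℝ) ≤ c.im * q.im),
    Real.sq_sqrt (by positivity : (0:ℝ) ≤ c.im * p.im)] at h4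
  have h5 : dist (c : ℂ) (p : ℂ) ^ 2 = (c.re - p.re) ^ 2 + (c.im - p.im) ^ 2 := by
    rw [Complex.dist_eq_re_im, Real.sq_sqrt (by positivity)]
    simp [UpperHalfPlane.coe_re, UpperHalfPlane.coe_im]
  have h6 : dist (c : ℂ) (q : ℂ) ^ 2 = (c.re - q.re) ^ 2 + (c.im - q.im) ^ 2 := by
    rw [Complex.dist_eq_re_im, Real.sq_sqrt (by positivity)]
    simp [UpperHalfPlane.coe_re, UpperHalfPlane.coe_im]
  rw [h5, h6] at h4
  exact mul_left_cancel₀ (ne_of_gt hc) (by linear_combination h4 / 4)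

private lemma key_real (x y x' y' a1 b1 a2 b2 a3 b3 : ℝ)
    (hy : 0 < y) (hy' : 0 < y')
    (hb1 : 0 < b1) (hb2 : 0 < b2) (hb3 : 0 < b3)
    (hne12 : ¬(a1 = a2 ∧ b1 = b2)) (hne23 : ¬(a2 = a3 ∧ b2 = b3))
    (hne13 : ¬(a1 = a3 ∧ b1 = b3))
    (e1 : ((x - a1) ^ 2 + (y - b1) ^ 2) * b2 = ((x - a2) ^ 2 + (y - b2) ^ 2) * b1)
    (e2 : ((x - a2) ^ 2 + (y - b2) ^ 2) * b3 = ((x - a3) ^ 2 + (y - b3) ^ 2) * b2)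
    (e1' : ((x' - a1) ^ 2 + (y' - b1) ^ 2) * b2 = ((x' - a2) ^ 2 + (y' - b2) ^ 2) * b1)
    (e2' : ((x' - a2) ^ 2 + (y' - b2) ^ 2) * b3 = ((x' - a3) ^ 2 + (y' - b3) ^ 2) * b2) :
    x = x' ∧ y = y' := by
  by_cases hK : a1 * (b2 - b3) + a2 * (b3 - b1) + a3 * (b1 - b2) = 0
  · exfalso
    by_cases hb12 : b1 = b2
    · by_cases hb23 : b2 = b3
      · have ha12 : a1 ≠ a2 := fun h => hne12 ⟨h, hb12⟩
        have ha23 : a2 ≠ a3 := fun h => hne23 ⟨h, hb23⟩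
        subst hb12; subst hb23
        have hx1 : (a1 - a2) * (a1 + a2 - 2 * x) = 0 := by
          have h := mul_right_cancel₀ (ne_of_gt hb1) e1
          nlinarith [h]
        have hx2 : (a2 - a3) * (a2 + a3 - 2 * x) = 0 := by
          have h := mul_right_cancel₀ (ne_of_gt hb1) e2
          nlinarith [h]
        have h1 : a1 + a2 - 2 * x = 0 :=
          (mul_eq_zero.1 hx1).resolve_left (sub_ne_zero.2 ha12)
        have h2 : a2 + a3 - 2 * x = 0 :=
          (mul_eq_zero.1 hx2).resolve_left (sub_ne_zero.2 ha23)
        exact hne13 ⟨by linarith, rfl⟩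
      · have h : (b2 - b3) * (a1 - a2) = 0 := by
          subst hb12; linear_combination hK
        have ha : a1 = a2 := by
          rcases mul_eq_zero.1 h with h' | h'
          · exact absurd (by linarith : b2 = b3) hb23
          · linarith
        exact hne12 ⟨ha, hb12⟩
    · by_cases hb23 : b2 = b3
      · have h : (b2 - b1) * (a2 - a3) = 0 := by
          subst hb23; linear_combination hK
        have ha : a2 = a3 := by
          rcases mul_eq_zero.1 h with h' | h'
          · exact absurd (by linarith : b1 = b2) hb12
          · linarith
        exact hne23 ⟨ha, hb23⟩
      · have hG : b2 * (a1 ^ 2 * (b2 - b3) + a2 ^ 2 * (b3 - b1) + a3 ^ 2 * (b1 - b2)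
            - (b2 - b3) * (b3 - b1) * (b1 - b2)) = 0 := by
          linear_combination (b2 - b1) * e2 - (b3 - b2) * e1 + (2 * b2 * x) * hK
        have hH : a1 ^ 2 * (b2 - b3) + a2 ^ 2 * (b3 - b1) + a3 ^ 2 * (b1 - b2)
            - (b2 - b3) * (b3 - b1) * (b1 - b2) = 0 :=
          (mul_eq_zero.1 hG).resolve_left (ne_of_gt hb2)
        have hprod : ((b1 - b2) * ((a1 - a2) ^ 2 + (b1 - b2) ^ 2)) * ((b3 - b1) * (b3 - b2))
            = 0 := by
          linear_combination (b1 - b2) ^ 2 * hH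
            - ((b1 - b2) * (a3 * (b1 - b2) + a1 * (b3 - b2) + a2 * (b1 - b3))) * hK
        have hlam : (b1 - b2) * ((a1 - a2) ^ 2 + (b1 - b2) ^ 2) ≠ 0 := by
          have h1 : b1 - b2 ≠ 0 := sub_ne_zero.2 hb12
          have h2 : (a1 - a2) ^ 2 + (b1 - b2) ^ 2 ≠ 0 := by positivity
          exact mul_ne_zero h1 h2
        have hzz := (mul_eq_zero.1 hprod).resolve_left hlam
        have hb31 : b3 = b1 := by
          rcases mul_eq_zero.1 hzz with h | h
          · linarith
          · exact absurd (by linarith : b2 = b3) hb23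
        have ha13 : a1 = a3 := by
          have h : (b2 - b1) * (a1 - a3) = 0 := by
            subst hb31; linear_combination hK
          rcases mul_eq_zero.1 h with h' | h'
          · exact absurd (by linarith : b1 = b2) hb12
          · linarith
        exact hne13 ⟨ha13, hb31.symm⟩
  · have h1 : (b2 - b1) * ((x ^ 2 + y ^ 2) - (x' ^ 2 + y' ^ 2))
        + 2 * (a2 * b1 - a1 * b2) * (x - x') = 0 := by
      linear_combination e1 - e1'
    have h2 : (b3 - b2) * ((x ^ 2 + y ^ 2) - (x' ^ 2 + y' ^ 2))
        + 2 * (a3 * b2 - a2 * b3) * (x - x') = 0 := by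
      linear_combination e2 - e2'
    have hD : -2 * b2 * (a1 * (b2 - b3) + a2 * (b3 - b1) + a3 * (b1 - b2)) ≠ 0 := by
      intro h
      rcases mul_eq_zero.1 h with h' | h'
      · rcases mul_eq_zero.1 h' with h'' | h''
        · norm_num at h''
        · exact absurd h'' (ne_of_gt hb2)
      · exact hK h'
    have hx : x = x' := by
      have hv : (-2 * b2 * (a1 * (b2 - b3) + a2 * (b3 - b1) + a3 * (b1 - b2))) * (x - x')
          = 0 := by
        linear_combination (b2 - b1) * h2 - (b3 - b2) * h1
      have h := (mul_eq_zero.1 hv).resolve_left hD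
      linarith
    have hs : x ^ 2 + y ^ 2 = x' ^ 2 + y' ^ 2 := by
      have hu : (-2 * b2 * (a1 * (b2 - b3) + a2 * (b3 - b1) + a3 * (b1 - b2)))
          * ((x ^ 2 + y ^ 2) - (x' ^ 2 + y' ^ 2)) = 0 := by
        linear_combination (2 * (a3 * b2 - a2 * b3)) * h1 - (2 * (a2 * b1 - a1 * b2)) * h2
      have h := (mul_eq_zero.1 hu).resolve_left hD
      linarith
    refine ⟨hx, ?_⟩
    have h : (y - y') * (y + y') = 0 := by
      rw [hx] at hs; linear_combination hs
    rcases mul_eq_zero.1 h with h' | h'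
    · linarith
    · linarith

theorem stmt19 (p1 p2 p3 : UpperHalfPlane)
    (h12 : p1 ≠ p2) (h23 : p2 ≠ p3) (h13 : p1 ≠ p3) :
    ∀ c c' : UpperHalfPlane,
      dist c p1 = dist c p2 → dist c p2 = dist c p3 →
      dist c' p1 = dist c' p2 → dist c' p2 = dist c' p3 →
      c = c' := by
  intro c c' hc1 hc2 hc1' hc2'
  obtain ⟨hx, hy⟩ := key_real c.re c.im c'.re c'.im p1.re p1.im p2.re p2.im p3.re p3.im
    c.im_pos c'.im_pos p1.im_pos p2.im_pos p3.im_pos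
    (fun ⟨h, h'⟩ => h12 (UpperHalfPlane.ext' h h'))
    (fun ⟨h, h'⟩ => h23 (UpperHalfPlane.ext' h h'))
    (fun ⟨h, h'⟩ => h13 (UpperHalfPlane.ext' h h'))
    (equi_poly c p1 p2 hc1) (equi_poly c p2 p3 hc2)
    (equi_poly c' p1 p2 hc1') (equi_poly c' p2 p3 hc2')
  exact UpperHalfPlane.ext' hx hy
end
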